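/- (Helmholtz decomposition for elastic oscillations.) Assume additionally that λ + μ > 0 and Λ ≠ 0, so that ω₁ ≠ ω₂. Suppose u is of class C⁴ on the open set D and satisfies μ·Δu + (λ+μ)·grad(div u) + Λ·u = 0 at every point of D. Define u⁽ᵖ⁾ := (ω₂ − ω₁)⁻¹·(Δu + ω₂·u) and u⁽ˢ⁾ := (ω₁ − ω₂)⁻¹·(Δu + ω₁·u). Then at every point of D: (i) u = u⁽ᵖ⁾ + u⁽ˢ⁾; (ii) Δu⁽ᵖ⁾ + ω₁·u⁽ᵖ⁾ = 0 and curl u⁽ᵖ⁾ = 0; (iii) Δu⁽ˢ⁾ + ω₂·u⁽ˢ⁾ = 0 and div u⁽ˢ⁾ = 0. -/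

import Mathlib

noncomputable section

/-- Partial derivative of a scalar function on `ℝ³` in the `i`-th coordinate direction. -/
def pd (i : Fin 3) (f : (Fin 3 → ℝ) → ℝ) : (Fin 3 → ℝ) → ℝ :=
  fun x => fderiv ℝ f x (Pi.single i 1)

/-- Scalar Laplacian on `ℝ³`. -/
def lap (f : (Fin 3 → ℝ) → ℝ) : (Fin 3 → ℝ) → ℝ :=
  fun x => ∑ i : Fin 3, pd i (pd i f) x

/-- Componentwise (vector) Laplacian on `ℝ³`. -/
def vlap (v : (Fin 3 → ℝ) → (Fin 3 → ℝ)) : (Fin 3 → ℝ) → (Fin 3 → ℝ) :=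
  fun x j => lap (fun y => v y j) x

/-- Divergence of a vector field on `ℝ³`. -/
def divg (v : (Fin 3 → ℝ) → (Fin 3 → ℝ)) : (Fin 3 → ℝ) → ℝ :=
  fun x => ∑ i : Fin 3, pd i (fun y => v y i) x

/-- Gradient of a scalar function on `ℝ³`. -/
def grad (f : (Fin 3 → ℝ) → ℝ) : (Fin 3 → ℝ) → (Fin 3 → ℝ) :=
  fun x i => pd i f x

/-- Curl of a vector field on `ℝ³`. -/
def curl (v : (Fin 3 → ℝ) → (Fin 3 → ℝ)) : (Fin 3 → ℝ) → (Fin 3 → ℝ) :=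
  fun x => ![pd 1 (fun y => v y 2) x - pd 2 (fun y => v y 1) x,
             pd 2 (fun y => v y 0) x - pd 0 (fun y => v y 2) x,
             pd 0 (fun y => v y 1) x - pd 1 (fun y => v y 0) x]

/- ### Auxiliary lemmas -/

abbrev E3 := Fin 3 → ℝ

lemma pd_congr {D : Set E3} (hD : IsOpen D) {f g : E3 → ℝ} (h : ∀ y ∈ D, f y = g y)
    {x : E3} (hx : x ∈ D) (i : Fin 3) : pd i f x = pd i g x := by
  unfold pd
  rw [Filter.EventuallyEq.fderiv_eq (by filter_upwards [hD.mem_nhds hx] with y hy using h y hy)]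

lemma pd_const (i : Fin 3) (c : ℝ) (x : E3) : pd i (fun _ => c) x = 0 := by
  simp [pd]

lemma diffAt {n : WithTop ℕ∞} {f : E3 → ℝ} {D : Set E3} (hf : ContDiffOn ℝ n f D)
    (hD : IsOpen D) {x : E3} (hx : x ∈ D) (hn : 1 ≤ n) : DifferentiableAt ℝ f x :=
  ((hf.contDiffAt (hD.mem_nhds hx)).of_le hn).differentiableAt one_ne_zero

lemma pd_const_mul {f : E3 → ℝ} {x : E3} (hf : DifferentiableAt ℝ f x) (i : Fin 3) (c : ℝ) :
    pd i (fun y => c * f y) x = c * pd i f x := by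
  unfold pd
  rw [fderiv_const_mul hf]
  simp

lemma pd_combo {f g : E3 → ℝ} {x : E3} (hf : DifferentiableAt ℝ f x)
    (hg : DifferentiableAt ℝ g x) (i : Fin 3) (a b : ℝ) :
    pd i (fun y => a * f y + b * g y) x = a * pd i f x + b * pd i g x := by
  unfold pd
  rw [fderiv_fun_add ((hf.const_mul a)) ((hg.const_mul b)), fderiv_const_mul hf, fderiv_const_mul hg]
  simp

lemma pd_combo3 {f g h : E3 → ℝ} {x : E3} (hf : DifferentiableAt ℝ f x)
    (hg : DifferentiableAt ℝ g x) (hh : DifferentiableAt ℝ h x) (i : Fin 3) (a b c : ℝ) :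
    pd i (fun y => a * f y + b * g y + c * h y) x = a * pd i f x + b * pd i g x + c * pd i h x := by
  unfold pd
  rw [fderiv_fun_add ((hf.const_mul a).fun_add (hg.const_mul b)) (hh.const_mul c),
    fderiv_fun_add (hf.const_mul a) (hg.const_mul b), fderiv_const_mul hf, fderiv_const_mul hg,
    fderiv_const_mul hh]
  simp

lemma pd_sum {f : Fin 3 → E3 → ℝ} {x : E3} (h : ∀ k, DifferentiableAt ℝ (f k) x) (i : Fin 3) :
    pd i (fun y => ∑ k, f k y) x = ∑ k, pd i (f k) x := by
  unfold pd
  rw [fderiv_fun_sum (fun k _ => h k)]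
  simp

lemma pd_contDiffOn {n m : WithTop ℕ∞} {f : E3 → ℝ} {D : Set E3} (hf : ContDiffOn ℝ n f D)
    (hD : IsOpen D) (h : m + 1 ≤ n) (i : Fin 3) : ContDiffOn ℝ m (pd i f) D :=
  (hf.fderiv_of_isOpen hD h).clm_apply contDiffOn_const

lemma schwarz {f : E3 → ℝ} {D : Set E3} (hf : ContDiffOn ℝ 2 f D) (hD : IsOpen D)
    {x : E3} (hx : x ∈ D) (i j : Fin 3) : pd i (pd j f) x = pd j (pd i f) x := by
  have hdf : ContDiffOn ℝ 1 (fun y => fderiv ℝ f y) D :=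
    hf.fderiv_of_isOpen hD (by norm_num)
  have hdfx : DifferentiableAt ℝ (fderiv ℝ f) x := by
    exact ((hdf.contDiffAt (hD.mem_nhds hx))).differentiableAt one_ne_zero
  have key : ∀ v w : E3, fderiv ℝ (fun y => fderiv ℝ f y w) x v
      = fderiv ℝ (fderiv ℝ f) x v w := by
    intro v w
    have e : (fun y => fderiv ℝ f y w)
        = ⇑((ContinuousLinearMap.apply ℝ ℝ) w) ∘ fderiv ℝ f := rfl
    rw [e, ((ContinuousLinearMap.apply ℝ ℝ w).hasFDerivAt.comp x hdfx.hasFDerivAt).fderiv]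
    rfl
  have hsymm : ∀ v w : E3, fderiv ℝ (fderiv ℝ f) x v w = fderiv ℝ (fderiv ℝ f) x w v := by
    intro v w
    refine second_derivative_symmetric_of_eventually (f := f) ?_ hdfx.hasFDerivAt v w
    filter_upwards [hD.mem_nhds hx] with y hy
    exact (diffAt hf hD hy one_le_two).hasFDerivAt
  show fderiv ℝ (fun y => fderiv ℝ f y (Pi.single j 1)) x (Pi.single i 1) = _
  rw [key, hsymm, ← key]
  rfl

lemma lap_congr {D : Set E3} (hD : IsOpen D) {f g : E3 → ℝ} (h : ∀ y ∈ D, f y = g y)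
    {x : E3} (hx : x ∈ D) : lap f x = lap g x := by
  unfold lap
  refine Finset.sum_congr rfl fun i _ => ?_
  exact pd_congr hD (fun y hy => pd_congr hD h hy i) hx i

lemma lap_combo {D : Set E3} (hD : IsOpen D) {f g : E3 → ℝ} (hf : ContDiffOn ℝ 2 f D)
    (hg : ContDiffOn ℝ 2 g D) {x : E3} (hx : x ∈ D) (a b : ℝ) :
    lap (fun y => a * f y + b * g y) x = a * lap f x + b * lap g x := by
  unfold lap
  rw [Finset.mul_sum, Finset.mul_sum, ← Finset.sum_add_distrib]
  refine Finset.sum_congr rfl fun i _ => ?_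
  have h1 : ∀ y ∈ D, pd i (fun y => a * f y + b * g y) y = a * pd i f y + b * pd i g y :=
    fun y hy => pd_combo (diffAt hf hD hy one_le_two) (diffAt hg hD hy one_le_two) i a b
  rw [pd_congr hD h1 hx i]
  exact pd_combo (diffAt (pd_contDiffOn hf hD (by norm_num) i) hD hx le_rfl)
    (diffAt (pd_contDiffOn hg hD (by norm_num) i) hD hx le_rfl) i a b

lemma lap_combo3 {D : Set E3} (hD : IsOpen D) {f g h : E3 → ℝ} (hf : ContDiffOn ℝ 2 f D)
    (hg : ContDiffOn ℝ 2 g D) (hh : ContDiffOn ℝ 2 h D) {x : E3} (hx : x ∈ D) (a b c : ℝ) :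
    lap (fun y => a * f y + b * g y + c * h y) x = a * lap f x + b * lap g x + c * lap h x := by
  unfold lap
  rw [Finset.mul_sum, Finset.mul_sum, Finset.mul_sum, ← Finset.sum_add_distrib,
    ← Finset.sum_add_distrib]
  refine Finset.sum_congr rfl fun i _ => ?_
  have h1 : ∀ y ∈ D, pd i (fun y => a * f y + b * g y + c * h y) y
      = a * pd i f y + b * pd i g y + c * pd i h y :=
    fun y hy => pd_combo3 (diffAt hf hD hy one_le_two) (diffAt hg hD hy one_le_two)
      (diffAt hh hD hy one_le_two) i a b c
  rw [pd_congr hD h1 hx i]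
  exact pd_combo3 (diffAt (pd_contDiffOn hf hD (by norm_num) i) hD hx le_rfl)
    (diffAt (pd_contDiffOn hg hD (by norm_num) i) hD hx le_rfl)
    (diffAt (pd_contDiffOn hh hD (by norm_num) i) hD hx le_rfl) i a b c

lemma swap3 {g : E3 → ℝ} {D : Set E3} (hD : IsOpen D) (hg : ContDiffOn ℝ 3 g D) {x : E3}
    (hx : x ∈ D) (j k : Fin 3) : pd j (pd k (pd k g)) x = pd k (pd k (pd j g)) x := by
  have hkg : ContDiffOn ℝ 2 (pd k g) D := pd_contDiffOn hg hD (by norm_num) k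
  rw [schwarz hkg hD hx j k]
  exact pd_congr hD (fun y hy => schwarz (hg.of_le (by norm_num)) hD hy j k) hx k

/-- Helmholtz decomposition for elastic oscillations: a `C⁴` solution of
`μ Δu + (λ+μ) grad (div u) + Λ u = 0` on an open set `D` (with `λ+μ > 0`, `Λ ≠ 0`) splits as
`u = u⁽ᵖ⁾ + u⁽ˢ⁾`, where `u⁽ᵖ⁾` is irrotational and satisfies `Δu⁽ᵖ⁾ + ω₁ u⁽ᵖ⁾ = 0`
and `u⁽ˢ⁾` is solenoidal and satisfies `Δu⁽ˢ⁾ + ω₂ u⁽ˢ⁾ = 0`. -/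
theorem helmholtz_decomposition_elastic
    (μ lam Λ : ℝ) (hμ : 0 < μ) (hlam : 0 < lam + 2 * μ)
    (hlamμ : 0 < lam + μ) (hΛ : Λ ≠ 0)
    (D : Set (Fin 3 → ℝ)) (hD : IsOpen D)
    (u : (Fin 3 → ℝ) → (Fin 3 → ℝ)) (hu : ContDiffOn ℝ 4 u D)
    (heq : ∀ x ∈ D, ∀ j : Fin 3,
      μ * vlap u x j + (lam + μ) * grad (divg u) x j + Λ * u x j = 0)
    (ω₁ ω₂ : ℝ) (hω₁ : ω₁ = Λ / (lam + 2 * μ)) (hω₂ : ω₂ = Λ / μ)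
    (up us : (Fin 3 → ℝ) → (Fin 3 → ℝ))
    (hup : up = fun x j => (ω₂ - ω₁)⁻¹ * (vlap u x j + ω₂ * u x j))
    (hus : us = fun x j => (ω₁ - ω₂)⁻¹ * (vlap u x j + ω₁ * u x j)) :
    ∀ x ∈ D,
      (∀ j : Fin 3, u x j = up x j + us x j) ∧
      (∀ j : Fin 3, vlap up x j + ω₁ * up x j = 0) ∧
      (∀ j : Fin 3, curl up x j = 0) ∧
      (∀ j : Fin 3, vlap us x j + ω₂ * us x j = 0) ∧
      divg us x = 0 := by
  have hμ0 : μ ≠ 0 := ne_of_gt hμ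
  have hl20 : lam + 2 * μ ≠ 0 := ne_of_gt hlam
  have hlμ0 : lam + μ ≠ 0 := ne_of_gt hlamμ
  have hΛ1 : Λ = μ * ω₂ := by rw [hω₂]; field_simp
  have hΛ2 : Λ = (lam + 2 * μ) * ω₁ := by rw [hω₁]; field_simp
  have hne : ω₂ - ω₁ ≠ 0 := by
    have e : ω₂ - ω₁ = Λ * (lam + μ) / (μ * (lam + 2 * μ)) := by
      rw [hω₁, hω₂, div_sub_div _ _ hμ0 hl20]; congr 1; ring
    rw [e]
    exact div_ne_zero (mul_ne_zero hΛ hlμ0) (mul_ne_zero hμ0 hl20)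
  have hne' : ω₁ - ω₂ ≠ 0 := by intro h; apply hne; linarith
  -- smoothness of components
  have hujC : ∀ j : Fin 3, ContDiffOn ℝ 4 (fun y => u y j) D := fun j =>
    (ContinuousLinearMap.proj j : (Fin 3 → ℝ) →L[ℝ] ℝ).contDiff.comp_contDiffOn hu
  have hFC : ContDiffOn ℝ 3 (divg u) D := by
    exact ContDiffOn.sum (fun i _ => pd_contDiffOn (hujC i) hD (by norm_num) i)
  have hpd1 : ∀ j i : Fin 3, ContDiffOn ℝ 3 (pd i (fun y => u y j)) D :=
    fun j i => pd_contDiffOn (hujC j) hD (by norm_num) i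
  have hpd2 : ∀ j i k : Fin 3, ContDiffOn ℝ 2 (pd k (pd i (fun y => u y j))) D :=
    fun j i k => pd_contDiffOn (hpd1 j i) hD (by norm_num) k
  have hlapujC : ∀ j : Fin 3, ContDiffOn ℝ 2 (lap (fun y => u y j)) D :=
    fun j => ContDiffOn.sum (fun i _ => hpd2 j i i)
  have hpdFC : ∀ j : Fin 3, ContDiffOn ℝ 2 (pd j (divg u)) D :=
    fun j => pd_contDiffOn hFC hD (by norm_num) j
  -- the PDE in scalar form
  have h1 : ∀ x ∈ D, ∀ j : Fin 3,
      μ * lap (fun y => u y j) x + (lam + μ) * pd j (divg u) x + Λ * u x j = 0 := heq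
  -- commuting sums of third derivatives
  have hS : ∀ x ∈ D,
      (∑ j : Fin 3, pd j (lap (fun y => u y j)) x) = lap (divg u) x := by
    intro x hx
    have lhs : ∀ j : Fin 3, pd j (lap (fun y => u y j)) x
        = ∑ k : Fin 3, pd k (pd k (pd j (fun y => u y j))) x := by
      intro j
      have e : pd j (lap (fun y => u y j)) x
          = ∑ k : Fin 3, pd j (pd k (pd k (fun y => u y j))) x :=
        pd_sum (fun k => diffAt (hpd2 j k k) hD hx one_le_two) j
      rw [e]
      exact Finset.sum_congr rfl fun k _ => swap3 hD ((hujC j).of_le (by norm_num)) hx j k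
    have rhs : lap (divg u) x
        = ∑ k : Fin 3, ∑ j : Fin 3, pd k (pd k (pd j (fun y => u y j))) x := by
      show (∑ k : Fin 3, pd k (pd k (divg u)) x) = _
      refine Finset.sum_congr rfl fun k _ => ?_
      have e1 : ∀ y ∈ D, pd k (divg u) y
          = ∑ j : Fin 3, pd k (pd j (fun z => u z j)) y :=
        fun y hy => pd_sum (fun j => diffAt (hpd1 j j) hD hy (by norm_num)) k
      rw [pd_congr hD e1 hx k]
      exact pd_sum (fun j => diffAt (hpd2 j j k) hD hx one_le_two) k
    rw [Finset.sum_congr rfl (fun j _ => lhs j), rhs, Finset.sum_comm]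
  -- divergence of the PDE
  have hdiv : ∀ x ∈ D, (lam + 2 * μ) * lap (divg u) x + Λ * divg u x = 0 := by
    intro x hx
    have key : ∀ j : Fin 3, μ * pd j (lap (fun y => u y j)) x
        + (lam + μ) * pd j (pd j (divg u)) x + Λ * pd j (fun y => u y j) x = 0 := by
      intro j
      have e0 : ∀ y ∈ D, (fun y => μ * lap (fun z => u z j) y
          + (lam + μ) * pd j (divg u) y + Λ * (fun z => u z j) y) y = (fun _ => (0:ℝ)) y :=
        fun y hy => h1 y hy j
      have hz := pd_congr hD e0 hx j
      rw [pd_const] at hz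
      rw [← hz]
      exact (pd_combo3 (diffAt (hlapujC j) hD hx one_le_two)
        (diffAt (hpdFC j) hD hx one_le_two)
        (diffAt ((hujC j).of_le (by norm_num)) hD hx one_le_two) j μ (lam + μ) Λ).symm
    have sum0 : (∑ j : Fin 3, (μ * pd j (lap (fun y => u y j)) x
        + (lam + μ) * pd j (pd j (divg u)) x + Λ * pd j (fun y => u y j) x)) = 0 := by
      simp only [key, Finset.sum_const_zero]
    rw [Finset.sum_add_distrib, Finset.sum_add_distrib, ← Finset.mul_sum, ← Finset.mul_sum,
      ← Finset.mul_sum, hS x hx] at sum0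
    have e2 : (∑ j : Fin 3, pd j (pd j (divg u)) x) = lap (divg u) x := rfl
    have e3 : (∑ j : Fin 3, pd j (fun y => u y j) x) = divg u x := rfl
    rw [e2, e3] at sum0
    linear_combination sum0
  have hlapF : ∀ x ∈ D, lap (divg u) x = -ω₁ * divg u x := by
    intro x hx
    have h := hdiv x hx
    rw [hΛ2] at h
    have h2 : (lam + 2 * μ) * (lap (divg u) x + ω₁ * divg u x) = 0 := by linear_combination h
    rcases mul_eq_zero.mp h2 with h' | h'
    · exact absurd h' hl20
    · linarith
  have hcomm : ∀ x ∈ D, ∀ j : Fin 3,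
      lap (pd j (divg u)) x = pd j (lap (divg u)) x := by
    intro x hx j
    have e2 : pd j (lap (divg u)) x = ∑ k : Fin 3, pd j (pd k (pd k (divg u))) x :=
      pd_sum (fun k => diffAt (pd_contDiffOn (m := 1)
        (pd_contDiffOn (m := 2) hFC hD (by norm_num) k) hD (by norm_num) k) hD hx le_rfl) j
    have e1 : lap (pd j (divg u)) x = ∑ k : Fin 3, pd k (pd k (pd j (divg u))) x := rfl
    rw [e1, e2]
    exact Finset.sum_congr rfl fun k _ => (swap3 hD hFC hx j k).symm
  have hpdlapF : ∀ x ∈ D, ∀ j : Fin 3,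
      pd j (lap (divg u)) x = -ω₁ * pd j (divg u) x := by
    intro x hx j
    have e : ∀ y ∈ D, lap (divg u) y = (fun y => -ω₁ * divg u y) y := hlapF
    rw [pd_congr hD e hx j]
    exact pd_const_mul (diffAt hFC hD hx (by norm_num)) j (-ω₁)
  -- biharmonic identity
  have hLL : ∀ x ∈ D, ∀ j : Fin 3, lap (lap (fun y => u y j)) x
      = -(ω₁ + ω₂) * lap (fun y => u y j) x - (ω₁ * ω₂) * u x j := by
    intro x hx j
    have e0 : ∀ y ∈ D, (fun y => μ * lap (fun z => u z j) y
        + (lam + μ) * pd j (divg u) y + Λ * (fun z => u z j) y) y = (fun _ => (0:ℝ)) y :=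
      fun y hy => h1 y hy j
    have hz := lap_congr hD e0 hx
    have hzero : lap (fun _ => (0:ℝ)) x = 0 := by
      have e : ∀ i : Fin 3, pd i (fun _ => (0:ℝ)) = fun _ => (0:ℝ) := by
        intro i; funext y; simp [pd]
      simp [lap, e, pd_const]
    have hexp := lap_combo3 hD (hlapujC j) (hpdFC j) ((hujC j).of_le (by norm_num)) hx
      μ (lam + μ) Λ
    have main : μ * lap (lap (fun y => u y j)) x + (lam + μ) * lap (pd j (divg u)) x
        + Λ * lap (fun y => u y j) x = 0 := by rw [← hexp, hz, hzero]
    rw [hcomm x hx j, hpdlapF x hx j] at main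
    have h4 := h1 x hx j
    rw [hΛ1] at main h4
    have hμmul : μ * (lap (lap (fun y => u y j)) x + (ω₁ + ω₂) * lap (fun y => u y j) x
        + (ω₁ * ω₂) * u x j) = 0 := by linear_combination main + ω₁ * h4
    have := (mul_eq_zero.mp hμmul).resolve_left hμ0
    linarith
  -- up is a gradient field
  have hupGrad : ∀ y ∈ D, ∀ b : Fin 3,
      up y b = (-((ω₂ - ω₁)⁻¹ * (lam + μ)) / μ) * pd b (divg u) y := by
    intro y hy b
    have h4 := h1 y hy b
    rw [hΛ1] at h4
    rw [hup]
    show (ω₂ - ω₁)⁻¹ * (vlap u y b + ω₂ * u y b) = _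
    have ev : vlap u y b = lap (fun z => u z b) y := rfl
    rw [ev, div_mul_eq_mul_div, eq_div_iff hμ0]
    linear_combination (ω₂ - ω₁)⁻¹ * h4
  have hcurlcomp : ∀ x ∈ D, ∀ a b : Fin 3,
      pd a (fun y => up y b) x - pd b (fun y => up y a) x = 0 := by
    intro x hx a b
    have e1 : pd a (fun y => up y b) x
        = (-((ω₂ - ω₁)⁻¹ * (lam + μ)) / μ) * pd a (pd b (divg u)) x := by
      rw [pd_congr hD (fun y hy => hupGrad y hy b) hx a]
      exact pd_const_mul (diffAt (hpdFC b) hD hx one_le_two) a _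
    have e2 : pd b (fun y => up y a) x
        = (-((ω₂ - ω₁)⁻¹ * (lam + μ)) / μ) * pd b (pd a (divg u)) x := by
      rw [pd_congr hD (fun y hy => hupGrad y hy a) hx b]
      exact pd_const_mul (diffAt (hpdFC a) hD hx one_le_two) b _
    rw [e1, e2, schwarz (hFC.of_le (by norm_num)) hD hx a b]
    ring
  intro x hx
  refine ⟨?_, ?_, ?_, ?_, ?_⟩
  · -- decomposition
    intro j
    simp only [hup, hus]
    field_simp
    ring
  · -- Δ up + ω₁ up = 0
    intro j
    have efun : (fun y => up y j) = fun y => (ω₂ - ω₁)⁻¹ * lap (fun z => u z j) y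
        + ((ω₂ - ω₁)⁻¹ * ω₂) * (fun z => u z j) y := by
      funext y
      rw [hup]
      show (ω₂ - ω₁)⁻¹ * (vlap u y j + ω₂ * u y j) = _
      have ev : vlap u y j = lap (fun z => u z j) y := rfl
      rw [ev]; ring
    have ev : vlap up x j = lap (fun y => up y j) x := rfl
    rw [ev, efun, lap_combo hD (hlapujC j) ((hujC j).of_le (by norm_num)) hx _ _,
      hLL x hx j]
    have evx : vlap u x j = lap (fun z => u z j) x := rfl
    simp only [hup]
    rw [evx]
    ring
  · -- curl up = 0
    intro j
    fin_cases j <;>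
      simp only [curl, Matrix.cons_val_zero, Matrix.cons_val_one, Matrix.head_cons,
        Matrix.cons_val_two, Matrix.tail_cons, Fin.isValue] <;>
      exact hcurlcomp x hx _ _
  · -- Δ us + ω₂ us = 0
    intro j
    have efun : (fun y => us y j) = fun y => (ω₁ - ω₂)⁻¹ * lap (fun z => u z j) y
        + ((ω₁ - ω₂)⁻¹ * ω₁) * (fun z => u z j) y := by
      funext y
      rw [hus]
      show (ω₁ - ω₂)⁻¹ * (vlap u y j + ω₁ * u y j) = _
      have ev : vlap u y j = lap (fun z => u z j) y := rfl
      rw [ev]; ring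
    have ev : vlap us x j = lap (fun y => us y j) x := rfl
    rw [ev, efun, lap_combo hD (hlapujC j) ((hujC j).of_le (by norm_num)) hx _ _,
      hLL x hx j]
    have evx : vlap u x j = lap (fun z => u z j) x := rfl
    simp only [hus]
    rw [evx]
    ring
  · -- div us = 0
    show (∑ i : Fin 3, pd i (fun y => us y i) x) = 0
    have e : ∀ i : Fin 3, pd i (fun y => us y i) x
        = (ω₁ - ω₂)⁻¹ * pd i (lap (fun z => u z i)) x
          + ((ω₁ - ω₂)⁻¹ * ω₁) * pd i (fun z => u z i) x := by
      intro i
      have efun : (fun y => us y i) = fun y => (ω₁ - ω₂)⁻¹ * lap (fun z => u z i) y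
          + ((ω₁ - ω₂)⁻¹ * ω₁) * (fun z => u z i) y := by
        funext y
        rw [hus]
        show (ω₁ - ω₂)⁻¹ * (vlap u y i + ω₁ * u y i) = _
        have ev : vlap u y i = lap (fun z => u z i) y := rfl
        rw [ev]; ring
      rw [efun]
      exact pd_combo (diffAt (hlapujC i) hD hx one_le_two)
        (diffAt (hujC i) hD hx (by norm_num)) i _ _
    rw [Finset.sum_congr rfl (fun i _ => e i), Finset.sum_add_distrib, ← Finset.mul_sum,
      ← Finset.mul_sum, hS x hx]
    have e3 : (∑ i : Fin 3, pd i (fun z => u z i) x) = divg u x := rfl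
    rw [e3, hlapF x hx]
    ring
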